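/- For integers k' ≥ 2 and ℓ ≥ 1 with k = k'ℓ, and any integer a with 0 ≤ a < k, one has (1/k) · Σ_{i=1}^{k'-1} ((ℓi - a) mod k) ≥ (k'-2)(k'-1)/(2k'). -/

import Mathlib

lemma gauss_aux (n : ℤ) (hn : 0 ≤ n) : 2 * ∑ j ∈ Finset.Ico (0:ℤ) n, j = n * (n - 1) := by
  refine Int.le_induction (motive := fun n _ => 2 * ∑ j ∈ Finset.Ico (0:ℤ) n, j = n * (n - 1)) ?_ ?_ n hn
  · simp
  · intro n hn ih
    have h : Finset.Ico (0:ℤ) (n+1) = insert n (Finset.Ico 0 n) := by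
      ext x
      simp only [Finset.mem_Ico, Finset.mem_insert]
      omega
    rw [h, Finset.sum_insert (by simp)]
    linear_combination ih

lemma shift_aux (k' c : ℤ) (hk' : 0 < k') :
    ∑ i ∈ Finset.Ico (0:ℤ) k', (i - c) % k' = ∑ j ∈ Finset.Ico (0:ℤ) k', j := by
  refine Finset.sum_nbij' (fun i => (i - c) % k') (fun j => (j + c) % k') ?_ ?_ ?_ ?_ ?_
  · intro i _
    simp only [Finset.mem_Ico]
    exact ⟨Int.emod_nonneg _ hk'.ne', Int.emod_lt_of_pos _ hk'⟩
  · intro j _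
    simp only [Finset.mem_Ico]
    exact ⟨Int.emod_nonneg _ hk'.ne', Int.emod_lt_of_pos _ hk'⟩
  · intro i hi
    simp only [Finset.mem_Ico] at hi
    show ((i - c) % k' + c) % k' = i
    rw [Int.add_emod, Int.emod_emod_of_dvd _ dvd_rfl, ← Int.add_emod, sub_add_cancel,
      Int.emod_eq_of_lt hi.1 hi.2]
  · intro j hj
    simp only [Finset.mem_Ico] at hj
    show ((j + c) % k' - c) % k' = j
    rw [Int.sub_emod, Int.emod_emod_of_dvd _ dvd_rfl, ← Int.sub_emod, add_sub_cancel_right,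
      Int.emod_eq_of_lt hj.1 hj.2]
  · intro i _; rfl

lemma pointwise_aux (k' ℓ a i c : ℤ) (hk' : 0 < k') (hℓ : 0 < ℓ)
    (hd0 : 0 ≤ ℓ * c - a) (hd1 : ℓ * c - a < ℓ) :
    ℓ * ((i - c) % k') ≤ (ℓ * i - a) % (k' * ℓ) := by
  set d := ℓ * c - a with hd
  set m := (i - c) % k' with hm
  have hm0 : 0 ≤ m := Int.emod_nonneg _ hk'.ne'
  have hm1 : m < k' := Int.emod_lt_of_pos _ hk'
  have hdiv : m + k' * ((i - c) / k') = i - c := Int.emod_add_mul_ediv _ _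
  have h1 : ℓ * i - a = (ℓ * m + d) + (k' * ℓ) * ((i - c) / k') := by
    have := congrArg (fun x => ℓ * x) hdiv
    linarith [this]
  have h2 : (ℓ * i - a) % (k' * ℓ) = ℓ * m + d := by
    rw [h1, Int.add_mul_emod_self_left]
    refine Int.emod_eq_of_lt (by nlinarith) (by nlinarith)
  rw [h2]
  linarith

lemma key_int (k' ℓ a : ℤ) (hk' : 2 ≤ k') (hℓ : 1 ≤ ℓ) (ha : 0 ≤ a) (ha' : a < k' * ℓ) :
    ℓ * ((k' - 1) * (k' - 2)) ≤ 2 * ∑ i ∈ Finset.Ioo (0:ℤ) k', (ℓ * i - a) % (k' * ℓ) := by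
  have hk0 : (0:ℤ) < k' := by linarith
  have hℓ0 : (0:ℤ) < ℓ := by linarith
  set c : ℤ := (a + ℓ - 1) / ℓ with hc
  have hed : ℓ * c + (a + ℓ - 1) % ℓ = a + ℓ - 1 := by
    rw [hc]; exact Int.mul_ediv_add_emod _ _
  have he0 : 0 ≤ (a + ℓ - 1) % ℓ := Int.emod_nonneg _ hℓ0.ne'
  have he1 : (a + ℓ - 1) % ℓ < ℓ := Int.emod_lt_of_pos _ hℓ0
  have hd0 : 0 ≤ ℓ * c - a := by omega
  have hd1 : ℓ * c - a < ℓ := by omega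
  have hpt : ∀ i ∈ Finset.Ioo (0:ℤ) k', ℓ * ((i - c) % k') ≤ (ℓ * i - a) % (k' * ℓ) :=
    fun i _ => pointwise_aux k' ℓ a i c hk0 hℓ0 hd0 hd1
  have hsum := Finset.sum_le_sum hpt
  have hIco : Finset.Ico (0:ℤ) k' = insert 0 (Finset.Ioo (0:ℤ) k') := by
    ext x
    simp only [Finset.mem_Ico, Finset.mem_insert, Finset.mem_Ioo]
    omega
  have h0 : (0:ℤ) ∉ Finset.Ioo (0:ℤ) k' := by simp
  have hsplit : ∑ i ∈ Finset.Ico (0:ℤ) k', (i - c) % k'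
      = (0 - c) % k' + ∑ i ∈ Finset.Ioo (0:ℤ) k', (i - c) % k' := by
    rw [hIco, Finset.sum_insert h0]
  have hG : 2 * ∑ i ∈ Finset.Ico (0:ℤ) k', (i - c) % k' = k' * (k' - 1) := by
    rw [shift_aux k' c hk0, gauss_aux k' hk0.le]
  have hmiss : (0 - c) % k' ≤ k' - 1 := by
    have := Int.emod_lt_of_pos (0 - c) hk0
    omega
  have hIoo : (k' - 1) * (k' - 2) ≤ 2 * ∑ i ∈ Finset.Ioo (0:ℤ) k', (i - c) % k' := by
    nlinarith [hsplit, hG, hmiss]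
  have hmul : ℓ * ((k' - 1) * (k' - 2)) ≤ 2 * ∑ i ∈ Finset.Ioo (0:ℤ) k', ℓ * ((i - c) % k') := by
    rw [← Finset.mul_sum]
    nlinarith [hIoo]
  linarith [hmul, hsum]

/-- For integers `k' ≥ 2` and `ℓ ≥ 1` with `k = k'·ℓ`, and any integer `a`
with `0 ≤ a < k`, one has `(1/k) · Σ_{i=1}^{k'-1} ((ℓ·i - a) mod k) ≥ (k'-2)(k'-1)/(2k')`,
where `x mod k` is the representative in `{0, …, k-1}`. -/
theorem stmt1 (k' ℓ a : ℤ) (hk' : 2 ≤ k') (hℓ : 1 ≤ ℓ) (ha : 0 ≤ a) (ha' : a < k' * ℓ) :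
    ((k' - 2) * (k' - 1) : ℚ) / (2 * (k' : ℚ)) ≤
      (1 / ((k' * ℓ : ℤ) : ℚ)) *
        ∑ i ∈ Finset.Ioo (0 : ℤ) k', (((ℓ * i - a) % (k' * ℓ) : ℤ) : ℚ) := by
  have hkey := key_int k' ℓ a hk' hℓ ha ha'
  set S : ℤ := ∑ i ∈ Finset.Ioo (0:ℤ) k', (ℓ * i - a) % (k' * ℓ) with hS
  have hk'q : (0:ℚ) < (k' : ℚ) := by exact_mod_cast (by linarith : (0:ℤ) < k')
  have hℓq : (0:ℚ) < (ℓ : ℚ) := by exact_mod_cast (by linarith : (0:ℤ) < ℓ)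
  have hT : ∑ i ∈ Finset.Ioo (0 : ℤ) k', (((ℓ * i - a) % (k' * ℓ) : ℤ) : ℚ) = (S : ℚ) := by
    rw [hS]; push_cast; rfl
  have hkeyq : (ℓ : ℚ) * (((k' : ℚ) - 1) * ((k' : ℚ) - 2)) ≤ 2 * (S : ℚ) := by
    exact_mod_cast hkey
  rw [hT, one_div_mul_eq_div]
  have hcast : ((k' * ℓ : ℤ) : ℚ) = (k' : ℚ) * (ℓ : ℚ) := by push_cast; ring
  rw [hcast, div_le_div_iff₀ (by positivity) (by positivity)]
  nlinarith [mul_le_mul_of_nonneg_left hkeyq hk'q.le]
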